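/- arXiv:2107.01752 — 7 statements merged into one kernel-verified Lean document; each statement's English description precedes it below -/
import Mathlib

section
/- For every vertex v ∈ {1,…,N}, the language-semiring DP recurrence fᴳ₁ = {[]} (the language containing only the empty list) and fᴳ_v = ⋃_{v' ∈ P(v)} fᴳ_{v'} ∘ {[(v',v)]} evaluates to exactly the set of paths to v: fᴳ_v = { [ (v₀,v₁), (v₁,v₂), …, (v_{k−1},v_k) ] : v₀ = 1, v_k = v, and v_{i−1} ∈ P(v_i) for all 1 ≤ i ≤ k }. -/
/-- Cross-join of two languages: `x ∘ y = { ℓ ++ ℓ' : ℓ ∈ x, ℓ' ∈ y }`. -/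
def crossJoin {E : Type*} (x y : Set (List E)) : Set (List E) :=
  Set.image2 (· ++ ·) x y

/-- `IsPathTo P v l` : the edge list `l = [(v₀,v₁),…,(v_{k−1},v_k)]` is a path in the DAG
with parent function `P`, starting at `v₀ = 1`, ending at `v_k = v`, with
`v_{i−1} ∈ P (v_i)` for all `i`. -/
inductive IsPathTo (P : ℕ → Finset ℕ) : ℕ → List (ℕ × ℕ) → Prop
  | nil : IsPathTo P 1 []
  | cons {v' v : ℕ} {l : List (ℕ × ℕ)} :
      IsPathTo P v' l → v' ∈ P v → IsPathTo P v (l ++ [(v', v)])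

/-- The language-semiring DP recurrence generates exactly the set of paths to each vertex. -/
theorem stmt_0 (N : ℕ) (hN : 1 ≤ N) (P : ℕ → Finset ℕ)
    (hP : ∀ v, v ≤ N → ∀ v' ∈ P v, 1 ≤ v' ∧ v' < v)
    (hP1 : P 1 = ∅)
    (fG : ℕ → Set (List (ℕ × ℕ)))
    (h1 : fG 1 = {[]})
    (hrec : ∀ v, 2 ≤ v → v ≤ N →
      fG v = ⋃ v' ∈ P v, crossJoin (fG v') {[(v', v)]}) :
    ∀ v, 1 ≤ v → v ≤ N → fG v = {l | IsPathTo P v l} := by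
  intro v
  induction v using Nat.strong_induction_on with
  | _ v ih =>
    intro hv1 hvN
    rcases eq_or_lt_of_le hv1 with h1v | h2v
    · subst h1v
      rw [h1]
      ext l
      simp only [Set.mem_singleton_iff, Set.mem_setOf_eq]
      constructor
      · rintro rfl; exact IsPathTo.nil
      · intro h
        cases h with
        | nil => rfl
        | cons _ hm => rw [hP1] at hm; exact absurd hm (Finset.notMem_empty _)
    · rw [hrec v h2v hvN]
      ext l
      simp only [Set.mem_iUnion, Set.mem_setOf_eq, crossJoin, Set.mem_image2,
        Set.mem_singleton_iff]
      constructor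
      · rintro ⟨v', hv', l', hl', e, rfl, rfl⟩
        obtain ⟨h1', hlt⟩ := hP v hvN v' hv'
        rw [ih v' hlt h1' (le_of_lt (lt_of_lt_of_le hlt hvN))] at hl'
        exact IsPathTo.cons hl' hv'
      · intro h
        cases h with
        | nil => omega
        | @cons v' _ l' hl' hm =>
          obtain ⟨h1', hlt⟩ := hP v hvN v' hm
          refine ⟨v', hm, l', ?_, [(v', v)], rfl, rfl⟩
          rw [ih v' hlt h1' (le_of_lt (lt_of_lt_of_le hlt hvN))]
          exact hl'
end

section
/- (DP semiring fusion, DAG instance.) Let S be a semiring, w : E → S, and let g be a semiring homomorphism from the language semiring over E to S satisfying g({[e]}) = w(e) for every edge e ∈ E. Define fᴳ by fᴳ₁ = {[]}, fᴳ_v = ⋃_{v' ∈ P(v)} fᴳ_{v'} ∘ {[(v',v)]}, and define fˢ in S by fˢ₁ = 1, fˢ_v = Σ_{v' ∈ P(v)} fˢ_{v'} * w(v',v). Then g(fᴳ_v) = fˢ_v for every v ∈ {1,…,N}. -/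
lemma g_biUnion {E : Type*} {S : Type*} [Semiring S]
    (g : Set (List E) → S)
    (hg_add : ∀ x y, g (x ∪ y) = g x + g y)
    (hg_zero : g ∅ = 0)
    (s : Finset ℕ) (F : ℕ → Set (List E)) :
    g (⋃ v ∈ s, F v) = ∑ v ∈ s, g (F v) := by
  induction s using Finset.induction with
  | empty => simpa using hg_zero
  | insert _ _ h ih =>
    rw [Finset.set_biUnion_insert, hg_add, ih, Finset.sum_insert h]

/-- DP semiring fusion, DAG instance: a semiring homomorphism `g` from the language
semiring over edges to `S`, with `g {[e]} = w e`, maps the generator DP recurrence `fG`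
to the `S`-valued DP recurrence `fS`. -/
theorem stmt_1 {S : Type*} [Semiring S]
    (N : ℕ) (hN : 1 ≤ N) (P : ℕ → Finset ℕ)
    (hP : ∀ v, v ≤ N → ∀ v' ∈ P v, 1 ≤ v' ∧ v' < v)
    (hP1 : P 1 = ∅)
    (w : ℕ × ℕ → S)
    (g : Set (List (ℕ × ℕ)) → S)
    (hg_add : ∀ x y, g (x ∪ y) = g x + g y)
    (hg_mul : ∀ x y, g (crossJoin x y) = g x * g y)
    (hg_zero : g ∅ = 0)
    (hg_one : g {[]} = 1)
    (hg_single : ∀ e : ℕ × ℕ, g {[e]} = w e)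
    (fG : ℕ → Set (List (ℕ × ℕ)))
    (hG1 : fG 1 = {[]})
    (hGrec : ∀ v, 2 ≤ v → v ≤ N →
      fG v = ⋃ v' ∈ P v, crossJoin (fG v') {[(v', v)]})
    (fS : ℕ → S)
    (hS1 : fS 1 = 1)
    (hSrec : ∀ v, 2 ≤ v → v ≤ N →
      fS v = ∑ v' ∈ P v, fS v' * w (v', v)) :
    ∀ v, 1 ≤ v → v ≤ N → g (fG v) = fS v := by
  intro v
  induction v using Nat.strong_induction_on with
  | _ v ih =>
    intro h1 hvN
    rcases eq_or_lt_of_le h1 with h | h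
    · rw [← h, hG1, hS1, hg_one]
    · have h2 : 2 ≤ v := h
      rw [hGrec v h2 hvN, hSrec v h2 hvN,
        g_biUnion g hg_add hg_zero]
      refine Finset.sum_congr rfl fun v' hv' => ?_
      obtain ⟨h1', hlt⟩ := hP v hvN v' hv'
      rw [hg_mul, hg_single, ih v' hlt h1' (le_of_lt (lt_of_lt_of_le hlt hvN))]
end

section
/- (DP semiring constrained fusion, DAG instance.) Let S be a semiring, M a monoid, w : E → S an edge-value map and μ : E → M a constraint map. Define F with values in the monoid algebra MonoidAlgebra S M by F₁ = single(1, 1) and F_v = Σ_{v' ∈ P(v)} F_{v'} * single(μ(v',v), w(v',v)). Then for every v ∈ {1,…,N} and every m ∈ M, F_v(m) equals the sum, over all paths p = [e₁,…,e_k] to v whose constraint value μ(e₁)·μ(e₂)·⋯·μ(e_k) equals m, of the ordered products w(e₁)·w(e₂)·⋯·w(e_k). Consequently, for any decidable predicate a : M → Prop, Σ_{m ∈ support(F_v), a(m)} F_v(m) equals the sum over all paths p to v with a(μ(e₁)⋯μ(e_k)) of the ordered products w(e₁)⋯w(e_k). -/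
/-- DP semiring constrained fusion, DAG instance: the `MonoidAlgebra`-valued
(constraint-lifted) DP recurrence computes, at each `m : M`, the sum over all paths with
constraint value `m` of the ordered products of their edge weights; projecting by an
acceptance predicate `a` gives the sum over all paths whose constraint value satisfies `a`. -/
theorem stmt_2 {S : Type*} [Semiring S] {M : Type*} [Monoid M] [DecidableEq M]
    (N : ℕ) (hN : 1 ≤ N) (P : ℕ → Finset ℕ)
    (hP : ∀ v, v ≤ N → ∀ v' ∈ P v, 1 ≤ v' ∧ v' < v)
    (hP1 : P 1 = ∅)
    (Paths : ℕ → Finset (List (ℕ × ℕ)))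
    (hPaths : ∀ v l, l ∈ Paths v ↔ IsPathTo P v l)
    (w : ℕ × ℕ → S) (μ : ℕ × ℕ → M)
    (F : ℕ → MonoidAlgebra S M)
    (hF1 : F 1 = MonoidAlgebra.single 1 1)
    (hFrec : ∀ v, 2 ≤ v → v ≤ N →
      F v = ∑ v' ∈ P v, F v' * MonoidAlgebra.single (μ (v', v)) (w (v', v))) :
    ∀ v, 1 ≤ v → v ≤ N →
      (∀ m : M, (F v).coeff m =
        ∑ p ∈ (Paths v).filter (fun p => (p.map μ).prod = m), (p.map w).prod) ∧
      (∀ (a : M → Prop) [DecidablePred a],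
        ∑ m ∈ (F v).coeff.support.filter a, (F v).coeff m =
          ∑ p ∈ (Paths v).filter (fun p => a ((p.map μ).prod)), (p.map w).prod) := by

  have key : ∀ v, 1 ≤ v → v ≤ N →
      F v = ∑ p ∈ Paths v, MonoidAlgebra.single ((p.map μ).prod) ((p.map w).prod) := by
    intro v
    induction v using Nat.strong_induction_on with
    | _ v ih =>
      intro hv1 hvN
      rcases eq_or_lt_of_le hv1 with h1 | hv2
      · subst h1
        have hp1 : Paths 1 = {[]} := by
          ext l
          rw [hPaths]
          constructor
          · intro h
            cases h with
            | nil => simp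
            | cons h hm => simp [hP1] at hm
          · intro h
            simp only [Finset.mem_singleton] at h
            subst h
            exact IsPathTo.nil
        simp [hp1, hF1]
      · have hv2' : 2 ≤ v := hv2
        have hpaths_eq : Paths v =
            (P v).biUnion (fun v' => (Paths v').image (fun l => l ++ [(v', v)])) := by
          ext l
          simp only [Finset.mem_biUnion, Finset.mem_image, hPaths]
          constructor
          · intro h
            cases h with
            | nil => omega
            | @cons v' _ l' h hm => exact ⟨v', hm, l', h, rfl⟩
          · rintro ⟨v', hm, l', hl', rfl⟩
            exact IsPathTo.cons hl' hm
        rw [hFrec v hv2' hvN, hpaths_eq, Finset.sum_biUnion ?disj]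
        case disj =>
          intro a ha b hb hab
          apply Finset.disjoint_left.mpr
          rintro l hl1 hl2
          simp only [Finset.mem_image] at hl1 hl2
          obtain ⟨l1, _, rfl⟩ := hl1
          obtain ⟨l2, _, heq⟩ := hl2
          have := (List.append_inj' heq rfl).2
          simp only [List.cons.injEq, Prod.mk.injEq] at this
          exact hab this.1.1.symm
        refine Finset.sum_congr rfl fun v' hv' => ?_
        obtain ⟨hb1, hb2⟩ := hP v hvN v' hv'
        rw [ih v' hb2 hb1 (le_trans (le_of_lt hb2) hvN)]
        rw [Finset.sum_mul, Finset.sum_image (fun a _ b _ h => List.append_cancel_right h)]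
        refine Finset.sum_congr rfl fun l hl => ?_
        rw [MonoidAlgebra.single_mul_single]
        simp
  intro v hv1 hvN
  have hkey := key v hv1 hvN
  have part1 : ∀ m, (F v).coeff m =
      ∑ p ∈ (Paths v).filter (fun p => (p.map μ).prod = m), (p.map w).prod := by
    intro m
    rw [hkey, MonoidAlgebra.coeff_sum, Finsupp.finset_sum_apply, Finset.sum_filter]
    refine Finset.sum_congr rfl fun p _ => ?_
    simp [Finsupp.single_apply]
  refine ⟨part1, ?_⟩
  intro a _
  set t := ((F v).coeff.support ∪ (Paths v).image (fun p => (p.map μ).prod)).filter a with ht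
  have lhs_eq : ∑ m ∈ (F v).coeff.support.filter a, (F v).coeff m = ∑ m ∈ t, (F v).coeff m := by
    apply Finset.sum_subset
    · intro m hm
      simp only [ht, Finset.mem_filter, Finset.mem_union] at *
      tauto
    · intro m hm hm2
      by_contra h
      have hms : m ∈ (F v).coeff.support := Finsupp.mem_support_iff.mpr h
      have ham : a m := (Finset.mem_filter.mp hm).2
      exact hm2 (Finset.mem_filter.mpr ⟨hms, ham⟩)
  rw [lhs_eq]
  have hmap : ∀ p ∈ (Paths v).filter (fun p => a ((p.map μ).prod)),
      (p.map μ).prod ∈ t := by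
    intro p hp
    simp only [Finset.mem_filter] at hp
    refine Finset.mem_filter.mpr ⟨Finset.mem_union_right _ ?_, hp.2⟩
    exact Finset.mem_image_of_mem _ hp.1
  rw [← Finset.sum_fiberwise_of_maps_to hmap (fun p => (p.map w).prod)]
  refine Finset.sum_congr rfl fun m hm => ?_
  rw [part1 m]
  have ham : a m := (Finset.mem_filter.mp hm).2
  rw [Finset.filter_filter]
  refine Finset.sum_congr (Finset.filter_congr fun p _ => ?_) fun _ _ => rfl
  constructor
  · intro h; exact ⟨h ▸ ham, h⟩
  · exact fun h => h.2
end

section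
/- (Filter–homomorphism fusion laws.) Let S be a semiring whose addition is idempotent (s + s = s for all s), M a monoid, μ : E → M and w : E → S. For a finite set x of lists over E define G(x) ∈ MonoidAlgebra S M by G(x)(m) = Σ_{ℓ ∈ x, μ*(ℓ) = m} w*(ℓ), where μ*(ℓ) is the ordered product in M of μ applied to the entries of ℓ and w*(ℓ) is the ordered product in S of w applied to the entries of ℓ. Then: (i) G(x ∪ y) = G(x) + G(y); (ii) G(x ∘ y) = G(x) * G(y), where x ∘ y = { ℓ ++ ℓ' : ℓ ∈ x, ℓ' ∈ y } and * is the convolution product of MonoidAlgebra S M; (iii) G(∅) = 0; (iv) G({[]}) = single(1, 1); (v) G({[e]}) = single(μ(e), w(e)) for every e ∈ E. -/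
section Aux

variable {A : Type*} [AddCommMonoid A]

lemma aux_sum_const_nonempty (hidem : ∀ a : A, a + a = a) {β : Type*} (c : A) :
    ∀ (s : Finset β), s.Nonempty → ∑ _ ∈ s, c = c := by
  intro s hs
  induction hs using Finset.Nonempty.cons_induction with
  | singleton a => simp
  | cons a s ha hs ih => rw [Finset.sum_cons, ih, hidem]

lemma aux_sum_union (hidem : ∀ a : A, a + a = a) {β : Type*} [DecidableEq β]
    (f : β → A) (x y : Finset β) :
    ∑ b ∈ x ∪ y, f b = ∑ b ∈ x, f b + ∑ b ∈ y, f b := by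
  have h1 := Finset.sum_union_inter (s₁ := x) (s₂ := y) (f := f)
  have h3 : (x ∪ y) ∩ (x ∩ y) = x ∩ y :=
    Finset.inter_eq_right.mpr Finset.inter_subset_union
  have h2 := Finset.sum_inter_add_sum_sdiff (x ∪ y) (x ∩ y) f
  rw [h3] at h2
  rw [← h1, ← h2]
  conv_rhs => rw [add_right_comm]
  rw [hidem]

lemma aux_sum_image (hidem : ∀ a : A, a + a = a) {β γ : Type*} [DecidableEq γ]
    (g : β → γ) (f : γ → A)
    (s : Finset β) : ∑ c ∈ s.image g, f c = ∑ b ∈ s, f (g b) := by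
  apply Finset.sum_image'
  intro c hc
  rw [Finset.sum_congr rfl (fun x hx => by
    rw [(Finset.mem_filter.mp hx).2])]
  refine (aux_sum_const_nonempty hidem _ _ ?_).symm
  exact ⟨c, Finset.mem_filter.mpr ⟨hc, rfl⟩⟩

end Aux

/-- Filter–homomorphism fusion laws: for an add-idempotent semiring `S`, the lifted
evaluation `G` of a finite language (with `G x m = Σ_{ℓ ∈ x, μ*(ℓ) = m} w*(ℓ)`) is a
semiring homomorphism from finite languages (union / cross-join) to `MonoidAlgebra S M`,
sending singleton one-letter words to `single (μ e) (w e)`. -/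
theorem stmt_3 {E : Type*} [DecidableEq E] {S : Type*} [Semiring S]
    (hidem : ∀ s : S, s + s = s)
    {M : Type*} [Monoid M] [DecidableEq M]
    (μ : E → M) (w : E → S)
    (G : Finset (List E) → MonoidAlgebra S M)
    (hG : ∀ (x : Finset (List E)) (m : M),
      (G x).coeff m = ∑ l ∈ x.filter (fun l => (l.map μ).prod = m), (l.map w).prod) :
    (∀ x y : Finset (List E), G (x ∪ y) = G x + G y) ∧
    (∀ x y : Finset (List E), G (Finset.image₂ (· ++ ·) x y) = G x * G y) ∧
    (G ∅ = 0) ∧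
    (G {([] : List E)} = MonoidAlgebra.single 1 1) ∧
    (∀ e : E, G {[e]} = MonoidAlgebra.single (μ e) (w e)) := by
  have hidem' : ∀ f : MonoidAlgebra S M, f + f = f := by
    intro f; ext m; exact hidem (f.coeff m)
  have key : ∀ x : Finset (List E),
      G x = ∑ l ∈ x, MonoidAlgebra.single ((l.map μ).prod) ((l.map w).prod) := by
    intro x
    ext m
    rw [hG, MonoidAlgebra.coeff_sum, Finset.sum_apply', Finset.sum_filter]
    exact Finset.sum_congr rfl fun l _ => by
      rw [MonoidAlgebra.coeff_single, Finsupp.single_apply]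
  refine ⟨?_, ?_, ?_, ?_, ?_⟩
  · intro x y
    rw [key, key, key]
    exact aux_sum_union hidem' _ x y
  · intro x y
    rw [key, key, key, Finset.sum_mul_sum, Finset.image₂,
      aux_sum_image hidem' _ _ _, Finset.sum_product]
    exact Finset.sum_congr rfl fun l _ => Finset.sum_congr rfl fun l' _ => by
      simp [Function.uncurry, MonoidAlgebra.single_mul_single]
  · rw [key]; simp
  · rw [key]; simp
  · intro e; rw [key]; simp
end

section
/- (Correctness of the minimum-segment-length-constrained segmentation DP.) Let S be a semiring, w : ℕ × ℕ → S, and N ≥ 1. Define f : {0,…,N} × {1,…,N} → S by f(0,m) = 1 if m = N and 0 otherwise, and for j ≥ 1: f(j,m) = Σ_{i=1}^{j} t(i,j,m) where, writing len = j − i + 1, t(i,j,m) = f(i−1,m)·w(i,j) if m < len, t(i,j,m) = (Σ_{m'=m}^{N} f(i−1,m'))·w(i,j) if m = len, and t(i,j,m) = 0 if m > len. Then for every L with 1 ≤ L ≤ N, f(N, L) = Σ over all segmentations 0 = k₀ < k₁ < ⋯ < k_L' = N (L' ≥ 1 arbitrary) whose minimal segment length min_{l} (k_l − k_{l−1}) equals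 L, of the ordered products w(k₀+1,k₁)·⋯·w(k_{L'−1}+1,k_{L'}). -/
/-- The ordered product of segment weights of a segmentation given by the list of cut
points `ks = [k₀, k₁, …, k_{L'}]`: `w (k₀+1, k₁) * ⋯ * w (k_{L'−1}+1, k_{L'})`. -/
def segValue {S : Type*} [Semiring S] (w : ℕ × ℕ → S) (ks : List ℕ) : S :=
  ((ks.zip ks.tail).map (fun p => w (p.1 + 1, p.2))).prod

/-- The (finite) set of segmentations of `{1,…,N}`: strictly increasing lists of cut
points `0 = k₀ < k₁ < ⋯ < k_{L'} = N` with `L' ≥ 1`. -/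
def segmentations (N : ℕ) : Finset (List ℕ) :=
  (List.range (N + 1)).sublists.toFinset.filter
    (fun ks => ks.IsChain (· < ·) ∧ ks.head? = some 0 ∧ ks.getLast? = some N ∧ 2 ≤ ks.length)

/-- The minimal segment length of the segmentation with cut points `ks` equals `L`:
every segment has length `≥ L` and some segment has length exactly `L`. -/
def minSegLenEq (ks : List ℕ) (L : ℕ) : Prop :=
  (∀ p ∈ ks.zip ks.tail, L ≤ p.2 - p.1) ∧ (∃ p ∈ ks.zip ks.tail, p.2 - p.1 = L)

instance (ks : List ℕ) (L : ℕ) : Decidable (minSegLenEq ks L) :=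
  inferInstanceAs (Decidable (_ ∧ _))

/-! ### Auxiliary definitions and lemmas -/

/-- Segmentations of `{1,…,j}` (inside the universe `{0,…,N}`). -/
def Segs (N j : ℕ) : Finset (List ℕ) :=
  (List.range (N + 1)).sublists.toFinset.filter
    (fun ks => ks.IsChain (· < ·) ∧ ks.head? = some 0 ∧ ks.getLast? = some j ∧ 2 ≤ ks.length)

/-- Minimal segment length (with junk default `N`). -/
def mval (N : ℕ) (ks : List ℕ) : ℕ :=
  ((ks.zip ks.tail).map (fun p => p.2 - p.1)).foldr min N


open List in
/-- A strictly sorted list of naturals below `n` is a sublist of `range n`. -/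
lemma sorted_sublist_range (l : List ℕ) (hl : l.IsChain (· < ·)) :
    ∀ n, (∀ x ∈ l, x < n) → l <+ List.range n := by
  induction l using List.reverseRecOn with
  | nil => intro n _; exact List.nil_sublist _
  | append_singleton l a ih =>
    intro n hn
    have hl' : l.IsChain (· < ·) := hl.sublist (List.sublist_append_left _ _)
    have hlt : ∀ x ∈ l, x < a := by
      rw [List.isChain_iff_pairwise, List.pairwise_append] at hl
      intro x hx; exact hl.2.2 x hx a (by simp)
    have h1 := ih hl' a hlt
    have h2 : (l ++ [a]) <+ List.range (a + 1) := by
      rw [List.range_succ]; exact h1.append (List.Sublist.refl _)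
    exact h2.trans (List.range_sublist.2 (hn a (by simp)))

lemma zip_tail_concat : ∀ (ks : List ℕ) (h : ks ≠ []) (j : ℕ),
    (ks ++ [j]).zip (ks ++ [j]).tail = ks.zip ks.tail ++ [(ks.getLast h, j)]
  | [a], _, j => by simp
  | a :: b :: t, _, j => by
    have := zip_tail_concat (b :: t) (by simp) j
    simp only [List.cons_append, List.zip_cons_cons, List.tail_cons] at this ⊢
    rw [this, List.getLast_cons (by simp : (b :: t : List ℕ) ≠ [])]

lemma chain'_le_getLast {ks : List ℕ} (h : ks.IsChain (· < ·)) {b : ℕ}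
    (hb : ks.getLast? = some b) : ∀ x ∈ ks, x ≤ b := by
  have hne : ks ≠ [] := by rintro rfl; simp at hb
  have hrep := List.dropLast_append_getLast hne
  have hbl : ks.getLast hne = b := by
    rw [List.getLast?_eq_getLast hne] at hb; exact Option.some.inj hb
  intro x hx
  rw [← hrep] at hx
  rcases List.mem_append.1 hx with h1 | h2
  · rw [List.isChain_iff_pairwise] at h
    conv at h => rw [← hrep]
    rw [List.pairwise_append] at h
    exact le_of_lt (hbl ▸ h.2.2 x h1 _ (by simp))
  · simp at h2; omega


lemma foldr_min_le_self (vs : List ℕ) (n : ℕ) : vs.foldr min n ≤ n := by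
  induction vs with
  | nil => simp
  | cons v vs ih => simp only [List.foldr_cons]; omega

lemma foldr_min_le (vs : List ℕ) (n : ℕ) : ∀ v ∈ vs, vs.foldr min n ≤ v := by
  induction vs with
  | nil => simp
  | cons v vs ih =>
    intro x hx
    rcases List.mem_cons.1 hx with rfl | hx
    · simp only [List.foldr_cons]; omega
    · have := ih x hx; simp only [List.foldr_cons]; omega

lemma le_foldr_min (vs : List ℕ) (n m : ℕ) (hm : m ≤ n) :
    m ≤ vs.foldr min n ↔ ∀ v ∈ vs, m ≤ v := by
  induction vs with
  | nil => simpa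
  | cons v vs ih => simp only [List.foldr_cons, le_min_iff, ih]; simp [and_comm]

lemma foldr_min_mem (vs : List ℕ) (n : ℕ) (hne : vs ≠ []) (hle : ∀ v ∈ vs, v ≤ n) :
    vs.foldr min n ∈ vs := by
  induction vs with
  | nil => simp at hne
  | cons v vs ih =>
    rcases eq_or_ne vs [] with rfl | h
    · simp only [List.foldr_cons, List.foldr_nil]
      have := hle v (by simp); simp [min_eq_left this]
    · have hmem := ih h (fun x hx => hle x (List.mem_cons_of_mem _ hx))
      simp only [List.foldr_cons]
      rcases le_or_gt v (vs.foldr min n) with hc | hc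
      · simp [min_eq_left hc]
      · simp [min_eq_right hc.le, hmem]

lemma foldr_min_eq_iff (vs : List ℕ) (n m : ℕ) (hne : vs ≠ []) (hle : ∀ v ∈ vs, v ≤ n) :
    vs.foldr min n = m ↔ (∀ v ∈ vs, m ≤ v) ∧ ∃ v ∈ vs, v = m := by
  constructor
  · rintro rfl
    exact ⟨foldr_min_le vs n, _, foldr_min_mem vs n hne hle, rfl⟩
  · rintro ⟨h1, v, hv, rfl⟩
    have h2 := foldr_min_le vs n v hv
    have h3 : v ≤ n := hle v hv
    have h4 := (le_foldr_min vs n v h3).2 h1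
    omega

section
variable {N j : ℕ}

lemma mem_Segs {N j : ℕ} (hj : j ≤ N) {ks : List ℕ} :
    ks ∈ Segs N j ↔
      ks.IsChain (· < ·) ∧ ks.head? = some 0 ∧ ks.getLast? = some j ∧ 2 ≤ ks.length := by
  unfold Segs
  rw [Finset.mem_filter, List.mem_toFinset, List.mem_sublists]
  constructor
  · exact fun h => h.2
  · intro h
    have hsub : List.Sublist ks (List.range (N + 1)) := by
      refine sorted_sublist_range ks h.1 _ fun x hx => ?_
      have := chain'_le_getLast h.1 h.2.2.1 x hx
      omega
    exact ⟨hsub, h⟩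

lemma Segs_le {N j : ℕ} {ks : List ℕ} (h : ks ∈ Segs N j) : ∀ x ∈ ks, x ≤ N := by
  unfold Segs at h
  rw [Finset.mem_filter, List.mem_toFinset, List.mem_sublists] at h
  intro x hx
  have := h.1.subset hx
  simp [List.mem_range] at this; omega

lemma pairs_ne_nil {ks : List ℕ} (h : 2 ≤ ks.length) : ks.zip ks.tail ≠ [] := by
  have : (ks.zip ks.tail).length = min ks.length ks.tail.length := List.length_zip
  intro hc
  rw [hc] at this
  simp [List.length_tail] at this
  omega

lemma seg_vals_le (hks : ks ∈ Segs N j) :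
    ∀ pr ∈ ks.zip ks.tail, pr.2 - pr.1 ≤ N := by
  intro pr hpr
  have h2 := (List.of_mem_zip hpr).2
  have := Segs_le hks pr.2 (List.mem_of_mem_tail h2)
  omega

lemma minEq_iff_mval (hj : j ≤ N) {ks : List ℕ} (hks : ks ∈ Segs N j) (m : ℕ) :
    minSegLenEq ks m ↔ mval N ks = m := by
  have hlen := ((mem_Segs hj).1 hks).2.2.2
  have hne : ((ks.zip ks.tail).map (fun p => p.2 - p.1)) ≠ [] := by
    simpa using pairs_ne_nil hlen
  have hle : ∀ v ∈ (ks.zip ks.tail).map (fun p => p.2 - p.1), v ≤ N := by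
    intro v hv
    obtain ⟨pr, hpr, rfl⟩ := List.mem_map.1 hv
    exact seg_vals_le hks pr hpr
  rw [minSegLenEq, mval, foldr_min_eq_iff _ _ _ hne hle]
  constructor
  · rintro ⟨h1, pr, hpr, he⟩
    refine ⟨fun v hv => ?_, ⟨_, List.mem_map.2 ⟨pr, hpr, rfl⟩, he⟩⟩
    obtain ⟨q, hq, rfl⟩ := List.mem_map.1 hv
    exact h1 q hq
  · rintro ⟨h1, v, hv, he⟩
    obtain ⟨pr, hpr, rfl⟩ := List.mem_map.1 hv
    exact ⟨fun q hq => h1 _ (List.mem_map.2 ⟨q, hq, rfl⟩), pr, hpr, he⟩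

lemma le_mval_iff {ks : List ℕ} {m : ℕ} (hm : m ≤ N) :
    m ≤ mval N ks ↔ ∀ pr ∈ ks.zip ks.tail, m ≤ pr.2 - pr.1 := by
  rw [mval, le_foldr_min _ _ _ hm]
  constructor
  · exact fun h pr hpr => h _ (List.mem_map.2 ⟨pr, hpr, rfl⟩)
  · intro h v hv
    obtain ⟨pr, hpr, rfl⟩ := List.mem_map.1 hv
    exact h pr hpr


lemma head?_dropLast {l : List ℕ} (h : 2 ≤ l.length) : l.dropLast.head? = l.head? := by
  match l with
  | a :: b :: t => simp

lemma eq_singleton_zero {l : List ℕ} (hc : l.IsChain (· < ·)) (hh : l.head? = some 0)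
    (hl : l.getLast? = some 0) : l = [0] := by
  match l with
  | [] => simp at hh
  | [x] => simp_all
  | x :: y :: r =>
    exfalso
    have hx : x = 0 := by simpa using hh
    have hy : y ≤ 0 := chain'_le_getLast hc hl y (by simp)
    have := (List.isChain_cons_cons.1 hc).1
    omega

lemma sum_Segs_decomp {S : Type*} [AddCommMonoid S] (hj1 : 1 ≤ j) (hjN : j ≤ N)
    (g : List ℕ → S) :
    ∑ ks ∈ Segs N j, g ks =
      g [0, j] + ∑ p ∈ Finset.Icc 1 (j - 1), ∑ ks ∈ Segs N p, g (ks ++ [j]) := by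
  classical
  have A : Finset ((_ : ℕ) × List ℕ) := ∅
  have hsig : ∑ p ∈ Finset.Icc 1 (j - 1), ∑ ks ∈ Segs N p, g (ks ++ [j])
      = ∑ a ∈ ((Finset.Icc 1 (j - 1)).sigma (fun p => Segs N p) : Finset ((_ : ℕ) × List ℕ)), g (a.2 ++ [j]) :=
    (Finset.sum_sigma (Finset.Icc 1 (j - 1)) (fun p => Segs N p) (fun a => g (a.2 ++ [j]))).symm
  have hnm : (⟨0, [0]⟩ : (_ : ℕ) × List ℕ) ∉ ((Finset.Icc 1 (j - 1)).sigma (fun p => Segs N p) : Finset ((_ : ℕ) × List ℕ)) := by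
    intro hc
    have := (Finset.mem_sigma.1 hc).1
    simp at this
  have hins : ∑ a ∈ insert (⟨0, [0]⟩ : (_ : ℕ) × List ℕ)
        (((Finset.Icc 1 (j - 1)).sigma (fun p => Segs N p) : Finset ((_ : ℕ) × List ℕ))),
        g (a.2 ++ [j])
      = g ([0] ++ [j]) + ∑ a ∈ ((Finset.Icc 1 (j - 1)).sigma (fun p => Segs N p) :
        Finset ((_ : ℕ) × List ℕ)), g (a.2 ++ [j]) := Finset.sum_insert hnm
  have hbij : ∑ ks ∈ Segs N j, g ks = ∑ a ∈ insert (⟨0, [0]⟩ : (_ : ℕ) × List ℕ)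
      (((Finset.Icc 1 (j - 1)).sigma (fun p => Segs N p) : Finset ((_ : ℕ) × List ℕ))),
      g (a.2 ++ [j]) := by
    refine Finset.sum_nbij' (fun ks => (⟨ks.dropLast.getLast?.getD 0, ks.dropLast⟩ : (_ : ℕ) × List ℕ))
      (fun a => a.2 ++ [j]) ?_ ?_ ?_ ?_ ?_
    · -- forward membership
      intro ks hks
      obtain ⟨hc, hh, hl, hlen⟩ := (mem_Segs hjN).1 hks
      obtain ⟨dl, hdl⟩ : ∃ dl, ks.dropLast = dl := ⟨_, rfl⟩
      have hdne : dl ≠ [] := by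
        intro hc'
        have := congrArg List.length hdl
        rw [hc'] at this
        simp [List.length_dropLast] at this
        omega
      have hrep : dl ++ [j] = ks := by rw [← hdl]; exact List.dropLast_append_getLast? j hl
      have hdh : dl.head? = some 0 := by rw [← hdl, head?_dropLast hlen, hh]
      have hdc : dl.IsChain (· < ·) := by rw [← hdl]; exact hc.sublist (List.dropLast_sublist _)
      obtain ⟨p, hdl'⟩ : ∃ p, dl.getLast? = some p :=
        ⟨dl.getLast hdne, List.getLast?_eq_getLast hdne⟩
      have hplt : p < j := by
        have hc2 : (dl ++ [j]).IsChain (· < ·) := by rw [hrep]; exact hc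
        exact (List.isChain_append.1 hc2).2.2 p hdl' j (by simp)
      show (⟨ks.dropLast.getLast?.getD 0, ks.dropLast⟩ : (_ : ℕ) × List ℕ) ∈ _
      rw [hdl, hdl', Option.getD_some]
      rcases Nat.eq_zero_or_pos p with hp0 | hp1
      · subst hp0
        have hdl0 : dl = [0] := eq_singleton_zero hdc hdh hdl'
        exact Finset.mem_insert.2 (Or.inl (by rw [hdl0]))
      · refine Finset.mem_insert.2 (Or.inr (Finset.mem_sigma.2 ⟨?_, ?_⟩))
        · show p ∈ Finset.Icc 1 (j - 1)
          exact Finset.mem_Icc.2 ⟨by omega, by omega⟩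
        · show dl ∈ Segs N p
          rw [mem_Segs (by omega)]
          refine ⟨hdc, hdh, hdl', ?_⟩
          match dl, hdne, hdh, hdl' with
          | [x], _, hdh, hdl' =>
            exfalso
            simp at hdh hdl'
            omega
          | x :: y :: r, _, _, _ => simp
    · -- backward membership
      rintro ⟨p, ks⟩ ha
      rcases Finset.mem_insert.1 ha with heq | ha
      · obtain ⟨rfl, rfl⟩ : p = 0 ∧ ks = [0] := by
          constructor
          · exact congrArg Sigma.fst heq
          · have := congrArg Sigma.snd heq
            simpa using this
        rw [mem_Segs hjN]
        exact ⟨List.isChain_pair.2 (by omega), rfl, rfl, by simp⟩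
      · have ha' := Finset.mem_sigma.1 ha
        have hp : 1 ≤ p ∧ p ≤ j - 1 := Finset.mem_Icc.1 ha'.1
        have hks : ks ∈ Segs N p := ha'.2
        obtain ⟨hc, hh, hl, hlen⟩ := (mem_Segs (show p ≤ N by omega)).1 hks
        have hne : ks ≠ [] := by rintro rfl; simp at hlen
        rw [mem_Segs hjN]
        refine ⟨?_, ?_, ?_, ?_⟩
        · refine List.isChain_append.2 ⟨hc, List.isChain_singleton _, ?_⟩
          intro x hx y hy
          rw [hl] at hx
          simp at hx hy
          omega
        · rcases ks with _ | ⟨a, t⟩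
          · simp at hlen
          · simpa using hh
        · simp
        · simp; omega
    · -- left inverse
      intro ks hks
      obtain ⟨_, _, hl, _⟩ := (mem_Segs hjN).1 hks
      exact List.dropLast_append_getLast? j hl
    · -- right inverse
      rintro ⟨p, ks⟩ ha
      show (⟨(ks ++ [j]).dropLast.getLast?.getD 0, (ks ++ [j]).dropLast⟩ : (_ : ℕ) × List ℕ)
        = ⟨p, ks⟩
      rcases Finset.mem_insert.1 ha with heq | ha
      · obtain ⟨rfl, rfl⟩ : p = 0 ∧ ks = [0] := by
          constructor
          · exact congrArg Sigma.fst heq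
          · have := congrArg Sigma.snd heq
            simpa using this
        simp
      · have ha' := Finset.mem_sigma.1 ha
        have hks : ks ∈ Segs N p := ha'.2
        have hp : 1 ≤ p ∧ p ≤ j - 1 := Finset.mem_Icc.1 ha'.1
        obtain ⟨_, _, hl, _⟩ := (mem_Segs (show p ≤ N by omega)).1 hks
        rw [List.dropLast_concat, hl, Option.getD_some]
    · -- values agree
      intro ks hks
      obtain ⟨_, _, hl, _⟩ := (mem_Segs hjN).1 hks
      show g ks = g (ks.dropLast ++ [j])
      rw [List.dropLast_append_getLast? j hl]
  rw [hbij, hins, hsig]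
  rfl

/-- Correctness of the minimum-segment-length-constrained segmentation DP: `f N L` is the
sum, over all segmentations `0 = k₀ < k₁ < ⋯ < k_{L'} = N` whose minimal segment length
`min_l (k_l − k_{l−1})` equals `L`, of the ordered products of segment weights. -/
theorem stmt_11 {S : Type*} [Semiring S] (w : ℕ × ℕ → S) (N : ℕ) (hN : 1 ≤ N)
    (f : ℕ → ℕ → S)
    (h0 : ∀ m, 1 ≤ m → m ≤ N → f 0 m = if m = N then 1 else 0)
    (hrec : ∀ j m, 1 ≤ j → j ≤ N → 1 ≤ m → m ≤ N →
      f j m = ∑ i ∈ Finset.Icc 1 j,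
        (if m < j - i + 1 then f (i - 1) m * w (i, j)
         else if m = j - i + 1 then (∑ m' ∈ Finset.Icc m N, f (i - 1) m') * w (i, j)
         else 0)) :
    ∀ L, 1 ≤ L → L ≤ N →
      f N L = ∑ ks ∈ (segmentations N).filter (fun ks => minSegLenEq ks L),
        segValue w ks := by
  classical
  have main : ∀ j, 1 ≤ j → j ≤ N → ∀ m, 1 ≤ m → m ≤ N →
      f j m = ∑ ks ∈ (Segs N j).filter (fun ks => minSegLenEq ks m), segValue w ks := by
    intro j
    induction j using Nat.strong_induction_on with
    | _ j IH =>
    intro hj1 hjN m hm1 hmN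
    rw [hrec j m hj1 hjN hm1 hmN, Finset.sum_filter,
      sum_Segs_decomp hj1 hjN (fun ks => if minSegLenEq ks m then segValue w ks else 0)]
    have hsplit : Finset.Icc 1 j = insert 1 (Finset.Icc 2 j) := by
      ext x; simp; omega
    rw [hsplit, Finset.sum_insert (by simp)]
    congr 1
    · -- first segment term
      have hseg0 : segValue w [0, j] = w (1, j) := by simp [segValue]
      have hmin0 : minSegLenEq [0, j] m ↔ m = j := by
        simp [minSegLenEq]; omega
      rcases Nat.lt_trichotomy m j with hc | hc | hc
      · rw [if_pos (by omega), if_neg (by rw [hmin0]; omega)]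
        rw [h0 m hm1 hmN, if_neg (by omega)]
        simp
      · rw [if_neg (by omega), if_pos (by omega), if_pos (hmin0.2 hc), hseg0]
        have hsum1 : (∑ m' ∈ Finset.Icc m N, f 0 m') = 1 := by
          rw [Finset.sum_congr rfl (fun m' hm' => h0 m' (by
            have := Finset.mem_Icc.1 hm'; omega) (Finset.mem_Icc.1 hm').2)]
          rw [Finset.sum_ite_eq' (Finset.Icc m N) N (fun _ => (1 : S))]
          rw [if_pos (Finset.mem_Icc.2 ⟨by omega, le_rfl⟩)]
        rw [hsum1, one_mul]
      · rw [if_neg (by omega), if_neg (by omega), if_neg (by rw [hmin0]; omega)]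
    · -- remaining segments
      refine Finset.sum_nbij' (fun i => i - 1) (fun p => p + 1) ?_ ?_ ?_ ?_ ?_
      · intro i hi; simp only [Finset.mem_Icc] at hi ⊢; omega
      · intro p hp; simp only [Finset.mem_Icc] at hp ⊢; omega
      · intro i hi; simp only [Finset.mem_Icc] at hi; show i - 1 + 1 = i; omega
      · intro p hp; simp only [Finset.mem_Icc] at hp; show p + 1 - 1 = p; omega
      · intro i hi
        simp only [Finset.mem_Icc] at hi
        obtain ⟨p, rfl⟩ : ∃ p, i = p + 1 := ⟨i - 1, by omega⟩
        have hp1 : 1 ≤ p := by omega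
        have hpj : p ≤ j - 1 := by omega
        have hpN : p ≤ N := by omega
        simp only [Nat.add_sub_cancel, show j - (p + 1) + 1 = j - p from by omega]
        -- pointwise computation of g (ks ++ [j])
        have hpt : ∀ ks ∈ Segs N p,
            (if minSegLenEq (ks ++ [j]) m then segValue w (ks ++ [j]) else 0)
            = (if (m ≤ mval N ks ∧ m ≤ j - p) ∧ (mval N ks = m ∨ j - p = m)
                then segValue w ks * w (p + 1, j) else 0) := by
          intro ks hks
          obtain ⟨hc, hh, hl, hlen⟩ := (mem_Segs hpN).1 hks
          have hne : ks ≠ [] := by rintro rfl; simp at hlen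
          have hgl : ks.getLast hne = p := by
            have := List.getLast?_eq_getLast (l := ks) hne
            rw [hl] at this
            exact (Option.some.inj this).symm
          have hzip : (ks ++ [j]).zip (ks ++ [j]).tail = ks.zip ks.tail ++ [(p, j)] := by
            rw [zip_tail_concat ks hne j, hgl]
          have hsv : segValue w (ks ++ [j]) = segValue w ks * w (p + 1, j) := by
            rw [segValue, hzip, List.map_append, List.prod_append]
            simp [segValue]
          have hml := minEq_iff_mval hpN hks m
          have hlm := le_mval_iff (N := N) (ks := ks) (m := m) hmN
          have hmeq : minSegLenEq (ks ++ [j]) m ↔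
              ((m ≤ mval N ks ∧ m ≤ j - p) ∧ (mval N ks = m ∨ j - p = m)) := by
            rw [minSegLenEq, hzip]
            have hall : (∀ pr ∈ ks.zip ks.tail ++ [(p, j)], m ≤ pr.2 - pr.1) ↔
                ((∀ pr ∈ ks.zip ks.tail, m ≤ pr.2 - pr.1) ∧ m ≤ j - p) := by
              constructor
              · intro h
                refine ⟨fun pr hpr => h pr (List.mem_append.2 (Or.inl hpr)), ?_⟩
                have := h (p, j) (List.mem_append.2 (Or.inr (by simp)))
                simpa using this
              · rintro ⟨h1, h2⟩ pr hpr
                rcases List.mem_append.1 hpr with h | h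
                · exact h1 pr h
                · simp at h; subst h; simpa using h2
            have hex : (∃ pr ∈ ks.zip ks.tail ++ [(p, j)], pr.2 - pr.1 = m) ↔
                ((∃ pr ∈ ks.zip ks.tail, pr.2 - pr.1 = m) ∨ j - p = m) := by
              constructor
              · rintro ⟨pr, hpr, he⟩
                rcases List.mem_append.1 hpr with h | h
                · exact Or.inl ⟨pr, h, he⟩
                · simp at h; subst h; simp at he; omega
              · rintro (⟨pr, hpr, he⟩ | he)
                · exact ⟨pr, List.mem_append.2 (Or.inl hpr), he⟩
                · exact ⟨(p, j), List.mem_append.2 (Or.inr (by simp)), by simpa using he⟩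
            rw [hall, hex, ← hlm]
            unfold minSegLenEq at hml
            rw [← hlm] at hml
            constructor
            · rintro ⟨⟨h1, h2⟩, h3 | h4⟩
              · exact ⟨⟨h1, h2⟩, Or.inl (hml.1 ⟨h1, h3⟩)⟩
              · exact ⟨⟨h1, h2⟩, Or.inr h4⟩
            · rintro ⟨⟨h1, h2⟩, h3 | h4⟩
              · exact ⟨⟨h1, h2⟩, Or.inl (hml.2 h3).2⟩
              · exact ⟨⟨h1, h2⟩, Or.inr h4⟩
          rw [if_congr hmeq hsv rfl]
        rw [Finset.sum_congr rfl hpt]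
        -- now case on m vs j - p
        have hjp1 : 1 ≤ j - p := by omega
        rcases Nat.lt_trichotomy m (j - p) with hc | hc | hc
        · rw [if_pos hc]
          have : ∀ ks ∈ Segs N p,
              (if (m ≤ mval N ks ∧ m ≤ j - p) ∧ (mval N ks = m ∨ j - p = m)
                then segValue w ks * w (p + 1, j) else 0)
              = (if mval N ks = m then segValue w ks else 0) * w (p + 1, j) := by
            intro ks _
            rw [ite_mul, zero_mul]
            exact if_congr (by constructor <;> intro h' <;> [skip; skip] <;> omega) rfl rfl
          rw [Finset.sum_congr rfl this, ← Finset.sum_mul, ← Finset.sum_filter]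
          congr 1
          rw [IH p (by omega) hp1 hpN m hm1 hmN]
          congr 1
          exact Finset.filter_congr (fun ks hks => minEq_iff_mval hpN hks m)
        · rw [if_neg (by omega), if_pos hc]
          have : ∀ ks ∈ Segs N p,
              (if (m ≤ mval N ks ∧ m ≤ j - p) ∧ (mval N ks = m ∨ j - p = m)
                then segValue w ks * w (p + 1, j) else 0)
              = (if m ≤ mval N ks then segValue w ks else 0) * w (p + 1, j) := by
            intro ks _
            rw [ite_mul, zero_mul]
            exact if_congr (by constructor <;> intro h' <;> omega) rfl rfl
          rw [Finset.sum_congr rfl this, ← Finset.sum_mul, ← Finset.sum_filter]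
          congr 1
          have hstep1 : ∀ m' ∈ Finset.Icc m N, f p m'
              = ∑ ks ∈ (Segs N p).filter (fun ks => mval N ks = m'), segValue w ks := by
            intro m' hm'
            have hm'' := Finset.mem_Icc.1 hm'
            rw [IH p (by omega) hp1 hpN m' (by omega) hm''.2]
            congr 1
            exact Finset.filter_congr (fun ks hks => minEq_iff_mval hpN hks m')
          rw [Finset.sum_congr rfl hstep1,
            Finset.sum_fiberwise_eq_sum_filter (Segs N p) (Finset.Icc m N) (mval N)
              (segValue w)]
          congr 1
          refine Finset.filter_congr (fun ks _ => ?_)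
          have := foldr_min_le_self ((ks.zip ks.tail).map (fun pr => pr.2 - pr.1)) N
          rw [Finset.mem_Icc]
          constructor
          · intro h'; omega
          · intro h'
            exact ⟨h', by rw [mval]; omega⟩
        · rw [if_neg (by omega), if_neg (by omega)]
          rw [Finset.sum_congr rfl (fun ks _ => if_neg (by omega))]
          simp
  intro L hL1 hLN
  have hseg : segmentations N = Segs N N := rfl
  rw [hseg]
  exact main N hN le_rfl L hL1 hLN
end
end

section
/- (Correctness of the derived longest increasing sub-sequence DP.) Let α be a linear order, N ≥ 1 and u : {1,…,N} → α. Define g : {0,…,N} × {1,…,N} → ℕ by g(0,m) = 1; for n ≥ 1: g(n,n) = max( g(n−1,n), 1 + max_{m' < n, u(m') < u(n)} g(n−1,m') ) where the inner maximum over an empty index set is taken to be 0, and g(n,m) = g(n−1,m) for m ≠ n. Then max_{1 ≤ m ≤ N} g(N,m) equals the length of the longest strictly increasing sub-sequence of u, i.e. the largest k for which there exist indices i₁ < i₂ < ⋯ < i_k in {1,…,N} with u(i₁) < u(i₂) < ⋯ < u(i_k). -/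
/-- Correctness of the derived longest increasing sub-sequence DP:
`max_{1 ≤ m ≤ N} g N m` is the largest `k` for which there exist indices
`i₁ < i₂ < ⋯ < i_k` in `{1,…,N}` with `u i₁ < u i₂ < ⋯ < u i_k` (the length of the
longest strictly increasing sub-sequence of `u`). -/
theorem stmt_17 {α : Type*} [LinearOrder α] (N : ℕ) (hN : 1 ≤ N) (u : ℕ → α)
    (g : ℕ → ℕ → ℕ)
    (h0 : ∀ m, 1 ≤ m → m ≤ N → g 0 m = 1)
    (hdiag : ∀ n, 1 ≤ n → n ≤ N →
      g n n = max (g (n - 1) n)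
        (1 + ((Finset.Icc 1 (n - 1)).filter (fun m' => u m' < u n)).sup
          (fun m' => g (n - 1) m')))
    (hoff : ∀ n m, 1 ≤ n → n ≤ N → 1 ≤ m → m ≤ N → m ≠ n → g n m = g (n - 1) m) :
    IsGreatest
      {k : ℕ | ∃ l : List ℕ, l ≠ [] ∧ l.length = k ∧ l.Chain' (· < ·) ∧
        (∀ i ∈ l, i ∈ Finset.Icc 1 N) ∧ l.Chain' (fun a b => u a < u b)}
      ((Finset.Icc 1 N).sup' (Finset.nonempty_Icc.mpr hN) (g N)) := by
  -- value of g below the diagonal in n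
  have low : ∀ n m, 1 ≤ m → m ≤ N → n < m → g n m = 1 := by
    intro n
    induction n with
    | zero => intro m h1 h2 _; exact h0 m h1 h2
    | succ n ih =>
      intro m h1 h2 h3
      rw [hoff (n+1) m (Nat.le_add_left 1 n) (by omega) h1 h2 (by omega)]
      simpa using ih m h1 h2 (Nat.lt_of_succ_lt h3)
  -- value of g above (or on) the diagonal
  have high : ∀ n m, 1 ≤ m → m ≤ n → n ≤ N → g n m = g m m := by
    intro n
    induction n with
    | zero => intro m h1 h2 _; omega
    | succ n ih =>
      intro m h1 h2 h3
      rcases eq_or_lt_of_le h2 with h | h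
      · rw [h]
      · have hm : m ≤ n := Nat.lt_succ_iff.mp h
        rw [hoff (n+1) m (Nat.le_add_left 1 n) h3 h1 (le_trans hm (Nat.le_of_succ_le h3))
          (Nat.ne_of_lt h)]
        simpa using ih m h1 hm (Nat.le_of_succ_le h3)
  -- recursion for the diagonal values
  have hrec : ∀ m, 1 ≤ m → m ≤ N →
      g m m = 1 + ((Finset.Icc 1 (m - 1)).filter (fun m' => u m' < u m)).sup
        (fun m' => g m' m') := by
    intro m h1 h2
    have := hdiag m h1 h2
    have hlow : g (m - 1) m = 1 := low (m - 1) m h1 h2 (by omega)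
    have hsup : ((Finset.Icc 1 (m - 1)).filter (fun m' => u m' < u m)).sup
        (fun m' => g (m - 1) m') =
        ((Finset.Icc 1 (m - 1)).filter (fun m' => u m' < u m)).sup
        (fun m' => g m' m') := by
      apply Finset.sup_congr rfl
      intro m' hm'
      simp only [Finset.mem_filter, Finset.mem_Icc] at hm'
      exact high (m - 1) m' hm'.1.1 hm'.1.2 (by omega)
    rw [this, hlow, hsup]
    omega
  -- key: IsGreatest for lists ending at m
  have key : ∀ m, 1 ≤ m → m ≤ N → IsGreatest
      {k : ℕ | ∃ l : List ℕ, l ≠ [] ∧ l.length = k ∧ l.Chain' (· < ·) ∧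
        (∀ i ∈ l, i ∈ Finset.Icc 1 N) ∧ l.Chain' (fun a b => u a < u b) ∧
        l.getLast? = some m} (g m m) := by
    intro m
    induction m using Nat.strong_induction_on with
    | _ m ih =>
      intro h1 h2
      set F := (Finset.Icc 1 (m - 1)).filter (fun m' => u m' < u m) with hF
      set s := F.sup (fun m' => g m' m') with hs
      have hgm : g m m = 1 + s := hrec m h1 h2
      constructor
      · -- membership
        rcases F.eq_empty_or_nonempty with he | hne
        · refine ⟨[m], by simp, ?_, List.isChain_singleton m, by simp [Finset.mem_Icc]; omega, List.isChain_singleton m, by simp⟩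
          rw [hgm, hs, he]
          simp
        · obtain ⟨m', hm'F, hm'eq⟩ := Finset.exists_mem_eq_sup F hne (fun m' => g m' m')
          have hm'' := hm'F
          simp only [hF, Finset.mem_filter, Finset.mem_Icc] at hm''
          have hlt : m' < m := by omega
          obtain ⟨l', hne', hlen', hc1', hmem', hc2', hlast'⟩ :=
            (ih m' hlt hm''.1.1 (by omega)).1
          refine ⟨l' ++ [m], by simp, ?_, ?_, ?_, ?_, by simp⟩
          · simp [hlen', hgm, hm'eq]; omega
          · simp only [List.Chain', List.isChain_append]
            refine ⟨hc1', by simp, ?_⟩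
            intro x hx y hy
            rw [hlast'] at hx
            simp at hx hy
            omega
          · intro i hi
            rcases List.mem_append.mp hi with h | h
            · exact hmem' i h
            · simp at h; simp [Finset.mem_Icc]; omega
          · simp only [List.Chain', List.isChain_append]
            refine ⟨hc2', by simp, ?_⟩
            intro x hx y hy
            rw [hlast'] at hx
            simp at hx hy
            subst hx hy
            exact hm''.2
      · -- upper bound
        rintro k ⟨l, hlne, hlen, hc1, hmem, hc2, hlast⟩
        have hl : l = l.dropLast ++ [m] := by
          conv_lhs => rw [← List.dropLast_append_getLast hlne]
          rw [List.getLast?_eq_getLast hlne] at hlast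
          simp at hlast
          rw [hlast]
        rcases eq_or_ne l.dropLast [] with ht | ht
        · rw [hl, ht] at hlen
          simp at hlen
          omega
        · set t := l.dropLast with htd
          rw [hl] at hc1 hc2
          simp only [List.Chain', List.isChain_append] at hc1 hc2
          obtain ⟨hc1t, -, hlt⟩ := hc1
          obtain ⟨hc2t, -, hult⟩ := hc2
          set m' := t.getLast ht with hm'
          have htl : t.getLast? = some m' := List.getLast?_eq_getLast ht
          have hm'lt : m' < m := hlt m' (by rw [htl]; simp) m (by simp)
          have hum' : u m' < u m := hult m' (by rw [htl]; simp) m (by simp)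
          have hm'mem : m' ∈ Finset.Icc 1 N := by
            apply hmem
            rw [hl]
            exact List.mem_append.mpr (Or.inl (List.getLast_mem ht))
          simp only [Finset.mem_Icc] at hm'mem
          have hm'F : m' ∈ F := by
            simp only [hF, Finset.mem_filter, Finset.mem_Icc]
            exact ⟨⟨hm'mem.1, by omega⟩, hum'⟩
          have hmemt : ∀ i ∈ t, i ∈ Finset.Icc 1 N := by
            intro i hi
            exact hmem i (by rw [hl]; exact List.mem_append.mpr (Or.inl hi))
          have htb : t.length ≤ g m' m' :=
            (ih m' hm'lt hm'mem.1 hm'mem.2).2 ⟨t, ht, rfl, hc1t, hmemt, hc2t, htl⟩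
          have hsb : g m' m' ≤ s := Finset.le_sup (f := fun x => g x x) hm'F
          have : l.length = t.length + 1 := by rw [hl]; simp
          omega
  -- conclude
  constructor
  · obtain ⟨m0, hm0, heq⟩ := Finset.exists_mem_eq_sup' (Finset.nonempty_Icc.mpr hN) (g N)
    simp only [Finset.mem_Icc] at hm0
    obtain ⟨l, hlne, hlen, hc1, hmem, hc2, -⟩ := (key m0 hm0.1 hm0.2).1
    refine ⟨l, hlne, ?_, hc1, hmem, hc2⟩
    rw [hlen, heq, high N m0 hm0.1 hm0.2 le_rfl]
  · rintro k ⟨l, hlne, hlen, hc1, hmem, hc2⟩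
    set m := l.getLast hlne with hm
    have hmmem : m ∈ Finset.Icc 1 N := hmem m (List.getLast_mem hlne)
    simp only [Finset.mem_Icc] at hmmem
    have hub : k ≤ g m m := (key m hmmem.1 hmmem.2).2
      ⟨l, hlne, hlen, hc1, hmem, hc2, List.getLast?_eq_getLast hlne⟩
    calc k ≤ g m m := hub
      _ = g N m := (high N m hmmem.1 hmmem.2 le_rfl).symm
      _ ≤ _ := Finset.le_sup' (g N) (Finset.mem_Icc.mpr hmmem)
end

section
/- (The arg-max-plus / Viterbi tupled structure is a semiring.) Let E be a type and let C be the set of pairs (c, x) with c ∈ ℝ ∪ {−∞} and x a set of lists over E, subject to the condition that c = −∞ implies x = ∅. Equip C with addition (c,x) ⊕ (d,y) = (c,x) if c > d, (d,y) if c < d, and (c, x ∪ y) if c = d; and multiplication (c,x) ⊗ (d,y) = (c + d, x ∘ y), where −∞ + r = r + (−∞) = −∞ and x ∘ y = { ℓ ++ ℓ' : ℓ ∈ x, ℓ' ∈ y }. Then C is closed under ⊕ and ⊗ and (C, ⊕, ⊗, (−∞, ∅), (0, {[]})) is a semiring: ⊕ is associative and commutative with identity (−∞, ∅), ⊗ is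 associative with identity (0, {[]}), (−∞, ∅) is absorbing for ⊗, and ⊗ distributes over ⊕ on both sides. -/
/-- The carrier of the arg-max-plus (Viterbi) tupled structure: pairs of a score in
`ℝ ∪ {−∞}` and a language over `E`. -/
abbrev Viterbi (E : Type*) := WithBot ℝ × Set (List E)

/-- The admissibility condition defining `C`: if the score is `−∞` then the language is
empty. -/
def Ok {E : Type*} (p : Viterbi E) : Prop := p.1 = ⊥ → p.2 = ∅

open scoped Classical in
/-- `(c,x) ⊕ (d,y) = (c,x)` if `c > d`, `(d,y)` if `c < d`, `(c, x ∪ y)` if `c = d`. -/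
noncomputable def vadd {E : Type*} (p q : Viterbi E) : Viterbi E :=
  if p.1 < q.1 then q else if q.1 < p.1 then p else (p.1, p.2 ∪ q.2)

/-- `(c,x) ⊗ (d,y) = (c + d, x ∘ y)`, with `−∞ + r = r + (−∞) = −∞` and
`x ∘ y = { ℓ ++ ℓ' : ℓ ∈ x, ℓ' ∈ y }`. -/
noncomputable def vmul {E : Type*} (p q : Viterbi E) : Viterbi E :=
  (p.1 + q.1, Set.image2 (· ++ ·) p.2 q.2)

/-- The additive identity `(−∞, ∅)`. -/
def vzero (E : Type*) : Viterbi E := ((⊥ : WithBot ℝ), (∅ : Set (List E)))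

/-- The multiplicative identity `(0, {[]})`. -/
def vone (E : Type*) : Viterbi E := ((0 : WithBot ℝ), ({[]} : Set (List E)))

lemma vadd_ok {E : Type*} (p q : Viterbi E) (hp : Ok p) (hq : Ok q) : Ok (vadd p q) := by
  unfold vadd
  split_ifs with h1 h2
  · exact hq
  · exact hp
  · have he : p.1 = q.1 := le_antisymm (not_lt.mp h2) (not_lt.mp h1)
    intro h
    simp [hp h, hq (he ▸ h)]

lemma vadd_comm' {E : Type*} (p q : Viterbi E) : vadd p q = vadd q p := by
  unfold vadd
  rcases lt_trichotomy p.1 q.1 with h | h | h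
  · simp [h, lt_asymm h]
  · simp [h, lt_irrefl, Set.union_comm]
  · simp [h, lt_asymm h]

lemma vadd_assoc' {E : Type*} (p q r : Viterbi E) :
    vadd (vadd p q) r = vadd p (vadd q r) := by
  unfold vadd
  rcases lt_trichotomy p.1 q.1 with h1 | h1 | h1 <;>
    rcases lt_trichotomy q.1 r.1 with h2 | h2 | h2
  · simp [h1, h2, h1.trans h2]
  · have h3 : p.1 < r.1 := h2 ▸ h1
    simp [h1, h2, h3, lt_irrefl]
  · simp [h1, h2, lt_asymm h2]
  · have h3 : p.1 < r.1 := h1 ▸ h2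
    simp [h1, h2, h3, lt_irrefl]
  · simp [h1, h2, lt_irrefl, Set.union_assoc]
  · simp [h1, h2, lt_irrefl, lt_asymm h2]
  · simp [h1, h2, lt_asymm h1]
  · have h3 : r.1 < p.1 := h2 ▸ h1
    simp [h1, h2, h3, lt_asymm h1, lt_asymm h3, lt_irrefl]
  · have h3 : r.1 < p.1 := h2.trans h1
    simp [h1, h2, h3, lt_asymm h1, lt_asymm h2, lt_asymm h3]

lemma vmul_vadd {E : Type*} (p q r : Viterbi E) (hp : Ok p) :
    vmul p (vadd q r) = vadd (vmul p q) (vmul p r) := by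
  by_cases hb : p.1 = ⊥
  · have h2 := hp hb
    unfold vadd vmul
    simp [hb, h2]
  · unfold vadd vmul
    simp only [WithBot.add_lt_add_iff_left hb]
    split_ifs <;> simp [Set.image2_union_right]

lemma vadd_vmul {E : Type*} (p q r : Viterbi E) (hr : Ok r) :
    vmul (vadd p q) r = vadd (vmul p r) (vmul q r) := by
  by_cases hb : r.1 = ⊥
  · have h2 := hr hb
    unfold vadd vmul
    simp [hb, h2]
  · unfold vadd vmul
    simp only [WithBot.add_lt_add_iff_right hb]
    split_ifs <;> simp [Set.image2_union_left]

/-- The arg-max-plus / Viterbi tupled structure is a semiring: `C` (the elements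
satisfying `Ok`) is closed under `⊕` and `⊗`; `⊕` is associative and commutative with
identity `(−∞, ∅)`; `⊗` is associative with identity `(0, {[]})`; `(−∞, ∅)` is absorbing
for `⊗`; and `⊗` distributes over `⊕` on both sides. -/
theorem stmt_18 (E : Type*) :
    (∀ p q : Viterbi E, Ok p → Ok q → Ok (vadd p q)) ∧
    (∀ p q : Viterbi E, Ok p → Ok q → Ok (vmul p q)) ∧
    (∀ p q r : Viterbi E, Ok p → Ok q → Ok r →
      vadd (vadd p q) r = vadd p (vadd q r)) ∧
    (∀ p q : Viterbi E, Ok p → Ok q → vadd p q = vadd q p) ∧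
    (∀ p : Viterbi E, Ok p → vadd p (vzero E) = p ∧ vadd (vzero E) p = p) ∧
    (∀ p q r : Viterbi E, Ok p → Ok q → Ok r →
      vmul (vmul p q) r = vmul p (vmul q r)) ∧
    (∀ p : Viterbi E, Ok p → vmul p (vone E) = p ∧ vmul (vone E) p = p) ∧
    (∀ p : Viterbi E, Ok p → vmul p (vzero E) = vzero E ∧ vmul (vzero E) p = vzero E) ∧
    (∀ p q r : Viterbi E, Ok p → Ok q → Ok r →
      vmul p (vadd q r) = vadd (vmul p q) (vmul p r) ∧
      vmul (vadd p q) r = vadd (vmul p r) (vmul q r)) := by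
  refine ⟨vadd_ok, ?_, fun p q r _ _ _ => vadd_assoc' p q r,
    fun p q _ _ => vadd_comm' p q, ?_, ?_, ?_, ?_,
    fun p q r hp _ hr => ⟨vmul_vadd p q r hp, vadd_vmul p q r hr⟩⟩
  · intro p q hp hq h
    rcases WithBot.add_eq_bot.mp h with h' | h'
    · simp [vmul, hp h']
    · simp [vmul, hq h']
  · intro p hp
    unfold vadd vzero
    by_cases hb : p.1 = ⊥
    · constructor <;> simp [hb, hp hb, Prod.ext_iff, eq_comm]
    · simp [hb, WithBot.bot_lt_iff_ne_bot.mpr hb, not_lt_bot]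
  · intro p q r _ _ _
    unfold vmul
    refine Prod.ext (add_assoc _ _ _) ?_
    exact Set.image2_assoc (fun a b c => List.append_assoc a b c)
  · intro p _
    unfold vmul vone
    constructor <;> refine Prod.ext (by simp) (by simp)
  · intro p _
    unfold vmul vzero
    constructor <;> refine Prod.ext (by simp) (by simp)
end
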